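/- The explicit solution y(t) = r*² − κ√(4ε²+δ²)/(κ − exp(2√(4ε²+δ²)·t)) of y' = 2ε² − 2y(y−δ), with r*² = (δ+√(4ε²+δ²))/2 and κ = (r² − r*²)/(r² − r*² + √(4ε²+δ²)) chosen so that y(0) = r², satisfies: if 0 ≤ r² ≤ r*² then κ ≤ 0 and y(t) ≤ r*² for all t ≥ 0; if r² ≥ r*² then 0 ≤ κ ≤ 1 and y(t) ≤ r*² + (r² − r*²)·exp(−2√(4ε²+δ²)·t) for all t ≥ 0. -/

import Mathlib

/-- Bounds on the explicit solution of the logistic-type ODE `y' = 2ε² − 2y(y−δ)`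
with `y(0) = r²`: with `c = √(4ε²+δ²)`, `r*² = (δ+c)/2` and
`κ = (r² − r*²)/(r² − r*² + c)`, the solution `y(t) = r*² − κc/(κ − e^{2ct})`
satisfies `y(0) = r²`, solves the ODE, and: if `r² ≤ r*²` then `κ ≤ 0` and `y ≤ r*²`;
if `r² ≥ r*²` then `0 ≤ κ ≤ 1` and `y(t) ≤ r*² + (r² − r*²)e^{−2ct}`. -/
theorem hopf_riccati_explicit_solution_bounds
    (ε δ r : ℝ) (hε : 0 < ε) (hδ : 0 ≤ δ) (hr : 0 ≤ r) :
    let c : ℝ := Real.sqrt (4 * ε ^ 2 + δ ^ 2)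
    let rs : ℝ := (δ + c) / 2
    let κ : ℝ := (r ^ 2 - rs) / (r ^ 2 - rs + c)
    let y : ℝ → ℝ := fun t => rs - κ * c / (κ - Real.exp (2 * c * t))
    y 0 = r ^ 2 ∧
    (∀ t ≥ (0 : ℝ), HasDerivAt y (2 * ε ^ 2 - 2 * y t * (y t - δ)) t) ∧
    (r ^ 2 ≤ rs → κ ≤ 0 ∧ ∀ t ≥ (0 : ℝ), y t ≤ rs) ∧
    (rs ≤ r ^ 2 → 0 ≤ κ ∧ κ ≤ 1 ∧
      ∀ t ≥ (0 : ℝ), y t ≤ rs + (r ^ 2 - rs) * Real.exp (-2 * c * t)) := by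
  intro c rs κ y
  have hcsq : c ^ 2 = 4 * ε ^ 2 + δ ^ 2 := Real.sq_sqrt (by positivity)
  have hc : 0 < c := Real.sqrt_pos.mpr (by positivity)
  have hδc : δ < c := by nlinarith
  have hrsc : rs < c := by
    show (δ + c) / 2 < c
    linarith
  have hrs0 : 0 < rs := by
    show 0 < (δ + c) / 2
    linarith
  have hr2 : 0 ≤ r ^ 2 := sq_nonneg r
  have hden : 0 < r ^ 2 - rs + c := by linarith
  have hκdef : κ = (r ^ 2 - rs) / (r ^ 2 - rs + c) := rfl
  have hκlt1 : κ < 1 := by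
    rw [hκdef, div_lt_one hden]; linarith
  have hκE : ∀ t : ℝ, 0 ≤ t → κ - Real.exp (2 * c * t) < 0 := by
    intro t ht
    have h1 : (1 : ℝ) ≤ Real.exp (2 * c * t) := Real.one_le_exp (by positivity)
    linarith
  have hc2rs : c = 2 * rs - δ := by
    show c = 2 * ((δ + c) / 2) - δ
    ring
  have hε2 : ε ^ 2 = rs * (rs - δ) := by nlinarith
  have hy : ∀ t : ℝ, y t = rs - κ * c / (κ - Real.exp (2 * c * t)) := fun _ => rfl
  have hκeq : κ * (r ^ 2 - rs + c) = r ^ 2 - rs := by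
    rw [hκdef]; field_simp
  refine ⟨?_, ?_, ?_, ?_⟩
  · -- y 0 = r ^ 2
    rw [hy 0]
    have hne1 : κ - 1 ≠ 0 := sub_ne_zero.mpr (ne_of_lt hκlt1)
    rw [mul_zero, Real.exp_zero]
    have h1 : κ * c / (κ - 1) = rs - r ^ 2 := by
      rw [div_eq_iff hne1]
      nlinarith [hκeq]
    rw [h1]; ring
  · -- derivative
    intro t ht
    have h1 : HasDerivAt (fun s : ℝ => 2 * c * s) (2 * c) t := by
      simpa using (hasDerivAt_id t).const_mul (2 * c)
    have h2 := h1.exp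
    have hne : κ - Real.exp (2 * c * t) ≠ 0 := ne_of_lt (hκE t ht)
    have h3 := (hasDerivAt_const t (κ * c)).div ((hasDerivAt_const t κ).sub h2) hne
    have h4 := h3.const_sub rs
    refine h4.congr_deriv ?_
    simp only [Pi.sub_apply]
    rw [hy t]
    set E := Real.exp (2 * c * t) with hEdef
    rw [hε2, hc2rs]
    have hne' : κ - E ≠ 0 := hne
    field_simp
    ring
  · -- small initial data
    intro h
    have hκ0 : κ ≤ 0 := by
      rw [hκdef]
      exact div_nonpos_of_nonpos_of_nonneg (by linarith) hden.le
    refine ⟨hκ0, ?_⟩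
    intro t ht
    rw [hy t]
    have hneg := hκE t ht
    have hκc : κ * c ≤ 0 := mul_nonpos_of_nonpos_of_nonneg hκ0 hc.le
    have hq : 0 ≤ κ * c / (κ - Real.exp (2 * c * t)) :=
      div_nonneg_iff.mpr (Or.inr ⟨hκc, hneg.le⟩)
    linarith
  · -- large initial data
    intro h
    have ha : 0 ≤ r ^ 2 - rs := by linarith
    have hκ0 : 0 ≤ κ := by
      rw [hκdef]; exact div_nonneg ha hden.le
    refine ⟨hκ0, hκlt1.le, ?_⟩
    intro t ht
    rw [hy t]
    set E := Real.exp (2 * c * t) with hEdef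
    have hE1 : (1 : ℝ) ≤ E := Real.one_le_exp (by positivity)
    have hEpos : (0 : ℝ) < E := by linarith
    have hEκ : 0 < E - κ := by linarith [hκlt1]
    have hexp : Real.exp (-2 * c * t) = E⁻¹ := by
      rw [hEdef, ← Real.exp_neg]
      ring_nf
    rw [hexp]
    have key : κ * c * E ≤ (r ^ 2 - rs) * (E - κ) := by
      nlinarith [mul_nonneg (mul_nonneg ha hκ0) (by linarith : (0 : ℝ) ≤ E - 1), hκeq]
    have h2 : - (κ * c / (κ - E)) = κ * c / (E - κ) := by
      rw [show E - κ = -(κ - E) by ring, div_neg, ← neg_div]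
    have h3 : κ * c / (E - κ) ≤ (r ^ 2 - rs) / E := by
      rw [div_le_div_iff₀ hEκ hEpos]
      linarith [key]
    have h4 : (r ^ 2 - rs) / E = (r ^ 2 - rs) * E⁻¹ := by ring
    linarith [h2 ▸ h3, h4 ▸ h3]
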